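/- Let g be the 6-dimensional nilpotent Lie algebra with dual basis e₁,…,e₆ and differentials (0,0,12,13,23,14), i.e. de₁=de₂=0, de₃=e₁∧e₂, de₄=e₁∧e₃, de₅=e₂∧e₃, de₆=e₁∧e₄. Then there is no closed complex form ρ = exp(B+iω) ∧ θ with θ ∈ g*⊗ℂ a 1-form, B, ω real invariant 2-forms, satisfying ω² ∧ θ ∧ θ̄ ≠ 0. (That is, g admits no left-invariant generalized complex structure of type 1.) -/

import Mathlib

/- STATEMENT 10: the 6-dimensional nilpotent Lie algebra `(0,0,12,13,23,14)` admits
no left-invariant generalized complex structure of type 1: there is no closed form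
`ρ = exp(B+iω) ∧ θ` with `θ` a complex 1-form, `B, ω` real 2-forms, and
`ω² ∧ θ ∧ θ̄ ≠ 0`.  Forms are modelled in `Λ•(g*⊗ℂ)` with `g* ⊗ ℂ = Fin 6 → ℂ`;
`d` is determined on the basis by the structure constants and extended as a graded
derivation (hence the explicit formulas for `d` of 1- and 2-forms below). -/

noncomputable section

open ExteriorAlgebra Complex

/-- The basis 1-forms `e₁,…,e₆` (0-indexed). -/
def e (i : Fin 6) : ExteriorAlgebra ℂ (Fin 6 → ℂ) := ι ℂ (Pi.single i 1)

/-- The values of `d` on the basis: `(0,0,12,13,23,14)`, i.e. `de₁=de₂=0`,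
`de₃=e₁∧e₂`, `de₄=e₁∧e₃`, `de₅=e₂∧e₃`, `de₆=e₁∧e₄` (0-indexed below). -/
def D : Fin 6 → ExteriorAlgebra ℂ (Fin 6 → ℂ) :=
  ![0, 0, e 0 * e 1, e 0 * e 2, e 1 * e 2, e 0 * e 3]

/-- The 1-form with coefficients `z`. -/
def oneForm (z : Fin 6 → ℂ) : ExteriorAlgebra ℂ (Fin 6 → ℂ) := ∑ i, z i • e i

/-- `d` of the 1-form with coefficients `z`. -/
def dOne (z : Fin 6 → ℂ) : ExteriorAlgebra ℂ (Fin 6 → ℂ) := ∑ i, z i • D i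

/-- The 2-form `∑ k_{ij} e_i ∧ e_j` with coefficients `k`. -/
def twoForm (k : Fin 6 → Fin 6 → ℂ) : ExteriorAlgebra ℂ (Fin 6 → ℂ) :=
  ∑ i, ∑ j, k i j • (e i * e j)

/-- `d` of the 2-form with coefficients `k` (derivation rule
`d(e_i∧e_j) = de_i∧e_j − e_i∧de_j`). -/
def dTwo (k : Fin 6 → Fin 6 → ℂ) : ExteriorAlgebra ℂ (Fin 6 → ℂ) :=
  ∑ i, ∑ j, k i j • (D i * e j - e i * D j)

/-! ### Auxiliary machinery -/

/-! ### Auxiliary machinery -/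

abbrev M6 := Fin 6 → ℂ
abbrev EA := ExteriorAlgebra ℂ M6

@[simp] lemma D_zero : D 0 = 0 := rfl
@[simp] lemma D_one : D 1 = 0 := rfl
@[simp] lemma D_two : D 2 = e 0 * e 1 := rfl
@[simp] lemma D_three : D 3 = e 0 * e 2 := rfl
@[simp] lemma D_four : D 4 = e 1 * e 2 := rfl
@[simp] lemma D_five : D 5 = e 0 * e 3 := rfl

lemma e_swap (i j : Fin 6) : e i * e j = -(e j * e i) :=
  eq_neg_of_add_eq_zero_left (ι_add_mul_swap _ _)
lemma e_swap' (i j : Fin 6) (x : EA) : e i * (e j * x) = -(e j * (e i * x)) := by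
  rw [← mul_assoc, e_swap i j, neg_mul, mul_assoc]
@[simp] lemma e_sq (i : Fin 6) : e i * e i = 0 := ι_sq_zero _
@[simp] lemma e_sq' (i : Fin 6) (x : EA) : e i * (e i * x) = 0 := by
  rw [← mul_assoc, e_sq, zero_mul]
@[simp] lemma sw_1_0 : e 1 * e 0 = -(e 0 * e 1) := e_swap 1 0
@[simp] lemma sw'_1_0 (x : EA) : e 1 * (e 0 * x) = -(e 0 * (e 1 * x)) := e_swap' 1 0 x
@[simp] lemma sw_2_0 : e 2 * e 0 = -(e 0 * e 2) := e_swap 2 0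
@[simp] lemma sw'_2_0 (x : EA) : e 2 * (e 0 * x) = -(e 0 * (e 2 * x)) := e_swap' 2 0 x
@[simp] lemma sw_2_1 : e 2 * e 1 = -(e 1 * e 2) := e_swap 2 1
@[simp] lemma sw'_2_1 (x : EA) : e 2 * (e 1 * x) = -(e 1 * (e 2 * x)) := e_swap' 2 1 x
@[simp] lemma sw_3_0 : e 3 * e 0 = -(e 0 * e 3) := e_swap 3 0
@[simp] lemma sw'_3_0 (x : EA) : e 3 * (e 0 * x) = -(e 0 * (e 3 * x)) := e_swap' 3 0 x
@[simp] lemma sw_3_1 : e 3 * e 1 = -(e 1 * e 3) := e_swap 3 1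
@[simp] lemma sw'_3_1 (x : EA) : e 3 * (e 1 * x) = -(e 1 * (e 3 * x)) := e_swap' 3 1 x
@[simp] lemma sw_3_2 : e 3 * e 2 = -(e 2 * e 3) := e_swap 3 2
@[simp] lemma sw'_3_2 (x : EA) : e 3 * (e 2 * x) = -(e 2 * (e 3 * x)) := e_swap' 3 2 x
@[simp] lemma sw_4_0 : e 4 * e 0 = -(e 0 * e 4) := e_swap 4 0
@[simp] lemma sw'_4_0 (x : EA) : e 4 * (e 0 * x) = -(e 0 * (e 4 * x)) := e_swap' 4 0 x
@[simp] lemma sw_4_1 : e 4 * e 1 = -(e 1 * e 4) := e_swap 4 1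
@[simp] lemma sw'_4_1 (x : EA) : e 4 * (e 1 * x) = -(e 1 * (e 4 * x)) := e_swap' 4 1 x
@[simp] lemma sw_4_2 : e 4 * e 2 = -(e 2 * e 4) := e_swap 4 2
@[simp] lemma sw'_4_2 (x : EA) : e 4 * (e 2 * x) = -(e 2 * (e 4 * x)) := e_swap' 4 2 x
@[simp] lemma sw_4_3 : e 4 * e 3 = -(e 3 * e 4) := e_swap 4 3
@[simp] lemma sw'_4_3 (x : EA) : e 4 * (e 3 * x) = -(e 3 * (e 4 * x)) := e_swap' 4 3 x
@[simp] lemma sw_5_0 : e 5 * e 0 = -(e 0 * e 5) := e_swap 5 0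
@[simp] lemma sw'_5_0 (x : EA) : e 5 * (e 0 * x) = -(e 0 * (e 5 * x)) := e_swap' 5 0 x
@[simp] lemma sw_5_1 : e 5 * e 1 = -(e 1 * e 5) := e_swap 5 1
@[simp] lemma sw'_5_1 (x : EA) : e 5 * (e 1 * x) = -(e 1 * (e 5 * x)) := e_swap' 5 1 x
@[simp] lemma sw_5_2 : e 5 * e 2 = -(e 2 * e 5) := e_swap 5 2
@[simp] lemma sw'_5_2 (x : EA) : e 5 * (e 2 * x) = -(e 2 * (e 5 * x)) := e_swap' 5 2 x
@[simp] lemma sw_5_3 : e 5 * e 3 = -(e 3 * e 5) := e_swap 5 3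
@[simp] lemma sw'_5_3 (x : EA) : e 5 * (e 3 * x) = -(e 3 * (e 5 * x)) := e_swap' 5 3 x
@[simp] lemma sw_5_4 : e 5 * e 4 = -(e 4 * e 5) := e_swap 5 4
@[simp] lemma sw'_5_4 (x : EA) : e 5 * (e 4 * x) = -(e 4 * (e 5 * x)) := e_swap' 5 4 x

/-! ### Coefficient functionals -/

def sgl (a : Fin 6) : M6 := Pi.single a 1

lemma e_def' (a : Fin 6) : e a = ι ℂ (sgl a) := rfl

def am (n : ℕ) (ix : Fin n → Fin 6) : M6 [⋀^Fin n]→ₗ[ℂ] ℂ :=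
  Matrix.detRowAlternating.compLinearMap (LinearMap.funLeft ℂ ℂ ix)

lemma am_apply (n : ℕ) (ix : Fin n → Fin 6) (v : Fin n → M6) :
    am n ix v = Matrix.det (Matrix.of fun r c => v r (ix c)) := rfl

def fam2 (ix : Fin 2 → Fin 6) : ∀ i, M6 [⋀^Fin i]→ₗ[ℂ] ℂ
  | 2 => am 2 ix
  | _ => 0

def L2 (ix : Fin 2 → Fin 6) : EA →ₗ[ℂ] ℂ := liftAlternating (fam2 ix)

def fam4 (ix : Fin 4 → Fin 6) : ∀ i, M6 [⋀^Fin i]→ₗ[ℂ] ℂ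
  | 4 => am 4 ix
  | _ => 0

def L4 (ix : Fin 4 → Fin 6) : EA →ₗ[ℂ] ℂ := liftAlternating (fam4 ix)

lemma prod2 (v : Fin 2 → M6) : ι ℂ (v 0) * ι ℂ (v 1) = ιMulti ℂ 2 v := by
  simp [ιMulti_apply, List.ofFn_succ, Matrix.vecTail, Function.comp]

lemma prod4 (v : Fin 4 → M6) :
    ι ℂ (v 0) * (ι ℂ (v 1) * (ι ℂ (v 2) * ι ℂ (v 3))) = ιMulti ℂ 4 v := by
  simp [ιMulti_apply, List.ofFn_succ, Matrix.vecTail, Function.comp, mul_assoc,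
    show (Fin.succ 2 : Fin 4) = 3 from rfl]

lemma L2_ee (a b : Fin 6) (ix : Fin 2 → Fin 6) :
    L2 ix (e a * e b) = sgl a (ix 0) * sgl b (ix 1) - sgl b (ix 0) * sgl a (ix 1) := by
  have h : e a * e b = ιMulti ℂ 2 ![sgl a, sgl b] := by rw [← prod2]; rfl
  rw [L2, h, liftAlternating_apply_ιMulti]
  show am 2 ix _ = _
  rw [am_apply, Matrix.det_fin_two]
  simp; ring

lemma L4_ee (a b c d : Fin 6) (ix : Fin 4 → Fin 6) :
    L4 ix (e a * (e b * (e c * e d))) =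
      Matrix.det (Matrix.of fun r k => (![sgl a, sgl b, sgl c, sgl d] r) (ix k)) := by
  have h : e a * (e b * (e c * e d)) = ιMulti ℂ 4 ![sgl a, sgl b, sgl c, sgl d] := by
    rw [← prod4]; rfl
  rw [L4, h, liftAlternating_apply_ιMulti]
  exact am_apply _ _ _

/-! ### Grading -/

abbrev GR : ℕ → Submodule ℂ EA := fun i => ⋀[ℂ]^i M6

lemma mem_e (i : Fin 6) : e i ∈ GR 1 := by
  show _ ∈ LinearMap.range (ι ℂ : M6 →ₗ[ℂ] EA) ^ 1
  rw [pow_one]; exact ⟨_, rfl⟩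

lemma mem_mul {a b : EA} {m n : ℕ} (ha : a ∈ GR m) (hb : b ∈ GR n) : a * b ∈ GR (m + n) :=
  SetLike.mul_mem_graded ha hb

lemma mem_D (i : Fin 6) : D i ∈ GR 2 := by
  fin_cases i
  · exact Submodule.zero_mem _
  · exact Submodule.zero_mem _
  · exact mem_mul (mem_e 0) (mem_e 1)
  · exact mem_mul (mem_e 0) (mem_e 2)
  · exact mem_mul (mem_e 1) (mem_e 2)
  · exact mem_mul (mem_e 0) (mem_e 3)

lemma mem_oneForm (z : Fin 6 → ℂ) : oneForm z ∈ GR 1 :=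
  Submodule.sum_mem _ fun i _ => Submodule.smul_mem _ _ (mem_e i)

lemma mem_dOne (z : Fin 6 → ℂ) : dOne z ∈ GR 2 :=
  Submodule.sum_mem _ fun i _ => Submodule.smul_mem _ _ (mem_D i)

lemma mem_twoForm (k : Fin 6 → Fin 6 → ℂ) : twoForm k ∈ GR 2 :=
  Submodule.sum_mem _ fun i _ => Submodule.sum_mem _ fun j _ =>
    Submodule.smul_mem _ _ (mem_mul (mem_e i) (mem_e j))

lemma mem_dTwo (k : Fin 6 → Fin 6 → ℂ) : dTwo k ∈ GR 3 :=
  Submodule.sum_mem _ fun i _ => Submodule.sum_mem _ fun j _ =>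
    Submodule.smul_mem _ _ (Submodule.sub_mem _
      (mem_mul (mem_D i) (mem_e j)) (mem_mul (mem_e i) (mem_D j)))

lemma deg2_of_sum (a b c d f : EA) (ha : a ∈ GR 2) (hb : b ∈ GR 4) (hc : c ∈ GR 4)
    (hd : d ∈ GR 6) (hf : f ∈ GR 6) (h : a + b + c + d + f = 0) : a = 0 := by
  have c2 := congrArg (fun y => ((DirectSum.decompose GR y 2 : GR 2) : EA)) h
  simpa [DirectSum.decompose_of_mem_same GR ha,
    DirectSum.decompose_of_mem_ne GR hb (by norm_num : (4:ℕ) ≠ 2),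
    DirectSum.decompose_of_mem_ne GR hc (by norm_num : (4:ℕ) ≠ 2),
    DirectSum.decompose_of_mem_ne GR hd (by norm_num : (6:ℕ) ≠ 2),
    DirectSum.decompose_of_mem_ne GR hf (by norm_num : (6:ℕ) ≠ 2)] using c2

lemma deg4_of_sum (b d : EA) (hb : b ∈ GR 4) (hd : d ∈ GR 6) (h : b + d = 0) : b = 0 := by
  have c4 := congrArg (fun y => ((DirectSum.decompose GR y 4 : GR 4) : EA)) h
  simpa [DirectSum.decompose_of_mem_same GR hb,
    DirectSum.decompose_of_mem_ne GR hd (by norm_num : (6:ℕ) ≠ 4)] using c4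

lemma twoForm_mul (k : Fin 6 → Fin 6 → ℂ) (x : EA) :
    twoForm k * x = ∑ i, ∑ j, k i j • (e i * (e j * x)) := by
  simp [twoForm, Finset.sum_mul, smul_mul_assoc, mul_assoc]

lemma dTwo_mul (k : Fin 6 → Fin 6 → ℂ) (x : EA) :
    dTwo k * x = ∑ i, ∑ j, k i j • (D i * (e j * x) - e i * (D j * x)) := by
  simp [dTwo, Finset.sum_mul, smul_mul_assoc, sub_mul, mul_assoc]

set_option maxHeartbeats 4000000 in
set_option linter.unnecessarySeqFocus false in
/-- no closed `ρ = exp(B+iω) ∧ θ` with `ω²∧θ∧θ̄ ≠ 0` exists.  Writing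
`φ = B + iω` (a 2-form), `ρ = θ + φ∧θ + ½φ²∧θ` and
`dρ = dθ + dφ∧θ + φ∧dθ + dφ∧φ∧θ + ½φ²∧dθ`. -/
theorem no_type_one_structure_0_0_12_13_23_14 :
    ¬ ∃ (z : Fin 6 → ℂ) (b w : Fin 6 → Fin 6 → ℝ),
      (let θ := oneForm z
       let θbar := oneForm fun i => starRingEnd ℂ (z i)
       let φ := twoForm fun i j => (b i j : ℂ) + Complex.I * (w i j : ℂ)
       let dφ := dTwo fun i j => (b i j : ℂ) + Complex.I * (w i j : ℂ)
       let ωc := twoForm fun i j => (w i j : ℂ)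
       -- closedness of ρ = exp(B+iω) ∧ θ :
       dOne z + dφ * θ + φ * dOne z + dφ * φ * θ + (1/2 : ℂ) • (φ * φ * dOne z) = 0
       -- nondegeneracy ω² ∧ θ ∧ θ̄ ≠ 0 :
       ∧ ωc * ωc * θ * θbar ≠ 0) := by
  rintro ⟨z, b, w, hh⟩
  obtain ⟨hcl, hne⟩ := hh
  set k : Fin 6 → Fin 6 → ℂ := fun i j => (b i j : ℂ) + Complex.I * (w i j : ℂ) with hk
  set wc : Fin 6 → Fin 6 → ℂ := fun i j => (w i j : ℂ) with hwc
  have h1 : dOne z = 0 := by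
    refine deg2_of_sum _ _ _ _ _ (mem_dOne z) ?_ ?_ ?_ ?_ hcl
    · exact mem_mul (mem_dTwo k) (mem_oneForm z)
    · exact mem_mul (mem_twoForm k) (mem_dOne z)
    · exact mem_mul (mem_mul (mem_dTwo k) (mem_twoForm k)) (mem_oneForm z)
    · exact Submodule.smul_mem _ _
        (mem_mul (mem_mul (mem_twoForm k) (mem_twoForm k)) (mem_dOne z))
  have h2 : dTwo k * oneForm z = 0 := by
    rw [h1] at hcl
    simp only [mul_zero, smul_zero, add_zero, zero_add] at hcl
    exact deg4_of_sum _ _ (mem_mul (mem_dTwo k) (mem_oneForm z))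
      (mem_mul (mem_mul (mem_dTwo k) (mem_twoForm k)) (mem_oneForm z)) hcl
  simp only [dOne, Fin.sum_univ_six, D_zero, D_one, D_two, D_three, D_four, D_five,
    smul_zero, zero_add] at h1
  have hz2 : z 2 = 0 := by
    have := congrArg (L2 ![0,1]) h1
    simpa [map_add, map_smul, L2_ee, sgl, smul_eq_mul] using this
  have hz3 : z 3 = 0 := by
    have := congrArg (L2 ![0,2]) h1
    simpa [map_add, map_smul, L2_ee, sgl, smul_eq_mul] using this
  have hz4 : z 4 = 0 := by
    have := congrArg (L2 ![1,2]) h1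
    simpa [map_add, map_smul, L2_ee, sgl, smul_eq_mul] using this
  have hz5 : z 5 = 0 := by
    have := congrArg (L2 ![0,3]) h1
    simpa [map_add, map_smul, L2_ee, sgl, smul_eq_mul] using this
  have hθ : oneForm z = z 0 • e 0 + z 1 • e 1 := by
    simp [oneForm, Fin.sum_univ_six, hz2, hz3, hz4, hz5]
  have hθb : (oneForm fun i => starRingEnd ℂ (z i))
      = starRingEnd ℂ (z 0) • e 0 + starRingEnd ℂ (z 1) • e 1 := by
    simp [oneForm, Fin.sum_univ_six, hz2, hz3, hz4, hz5]
  rw [hθ, mul_add, mul_smul_comm, mul_smul_comm] at h2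
  have hNF0 : dTwo k * e 0 = (k 3 4 - k 4 3) • (e 0 * (e 1 * (e 2 * e 3)))
      + (k 5 4 - k 4 5) • (e 0 * (e 1 * (e 2 * e 5))) := by
    rw [dTwo_mul]
    simp only [Fin.sum_univ_six, D_zero, D_one, D_two, D_three, D_four, D_five,
      mul_assoc, zero_mul, mul_zero, zero_sub, sub_zero, smul_neg, smul_zero, neg_zero, mul_neg,
      add_zero, zero_add, neg_neg, smul_sub, mul_add, mul_smul_comm, smul_smul, smul_add, sub_self,
      sw_1_0, sw'_1_0, sw_2_0, sw'_2_0, sw_2_1, sw'_2_1, sw_3_0, sw'_3_0, sw_3_1, sw'_3_1, sw_3_2, sw'_3_2, sw_4_0, sw'_4_0, sw_4_1, sw'_4_1, sw_4_2, sw'_4_2, sw_4_3, sw'_4_3, sw_5_0, sw'_5_0, sw_5_1, sw'_5_1, sw_5_2, sw'_5_2, sw_5_3, sw'_5_3, sw_5_4, sw'_5_4, e_sq, e_sq']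
    module
  have hNF1 : dTwo k * e 1 = (k 2 5 - k 5 2) • (e 0 * (e 1 * (e 2 * e 3)))
      + (k 3 4 - k 4 3) • (e 0 * (e 1 * (e 2 * e 4)))
      + (k 3 5 - k 5 3) • (e 0 * (e 1 * (e 2 * e 5)))
      + (k 5 4 - k 4 5) • (e 0 * (e 1 * (e 3 * e 4))) := by
    rw [dTwo_mul]
    simp only [Fin.sum_univ_six, D_zero, D_one, D_two, D_three, D_four, D_five,
      mul_assoc, zero_mul, mul_zero, zero_sub, sub_zero, smul_neg, smul_zero, neg_zero, mul_neg,
      add_zero, zero_add, neg_neg, smul_sub, mul_add, mul_smul_comm, smul_smul, smul_add, sub_self,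
      sw_1_0, sw'_1_0, sw_2_0, sw'_2_0, sw_2_1, sw'_2_1, sw_3_0, sw'_3_0, sw_3_1, sw'_3_1, sw_3_2, sw'_3_2, sw_4_0, sw'_4_0, sw_4_1, sw'_4_1, sw_4_2, sw'_4_2, sw_4_3, sw'_4_3, sw_5_0, sw'_5_0, sw_5_1, sw'_5_1, sw_5_2, sw'_5_2, sw_5_3, sw'_5_3, sw_5_4, sw'_5_4, e_sq, e_sq']
    module
  rw [hNF0, hNF1] at h2
  have VAA : L4 ![0,1,2,3] (e 0 * (e 1 * (e 2 * e 3))) = 1 := by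
    rw [L4_ee]
    simp [Matrix.det_succ_row_zero, Fin.sum_univ_succ, sgl, Pi.single_apply, Fin.succAbove]

  have VAB : L4 ![0,1,2,3] (e 0 * (e 1 * (e 2 * e 4))) = 0 := by
    rw [L4_ee]
    simp [Matrix.det_succ_row_zero, Fin.sum_univ_succ, sgl, Pi.single_apply, Fin.succAbove]

  have VAC : L4 ![0,1,2,3] (e 0 * (e 1 * (e 2 * e 5))) = 0 := by
    rw [L4_ee]
    simp [Matrix.det_succ_row_zero, Fin.sum_univ_succ, sgl, Pi.single_apply, Fin.succAbove]

  have VAD : L4 ![0,1,2,3] (e 0 * (e 1 * (e 3 * e 4))) = 0 := by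
    rw [L4_ee]
    simp [Matrix.det_succ_row_zero, Fin.sum_univ_succ, sgl, Pi.single_apply, Fin.succAbove]

  have VBA : L4 ![0,1,2,4] (e 0 * (e 1 * (e 2 * e 3))) = 0 := by
    rw [L4_ee]
    simp [Matrix.det_succ_row_zero, Fin.sum_univ_succ, sgl, Pi.single_apply, Fin.succAbove]

  have VBB : L4 ![0,1,2,4] (e 0 * (e 1 * (e 2 * e 4))) = 1 := by
    rw [L4_ee]
    simp [Matrix.det_succ_row_zero, Fin.sum_univ_succ, sgl, Pi.single_apply, Fin.succAbove]

  have VBC : L4 ![0,1,2,4] (e 0 * (e 1 * (e 2 * e 5))) = 0 := by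
    rw [L4_ee]
    simp [Matrix.det_succ_row_zero, Fin.sum_univ_succ, sgl, Pi.single_apply, Fin.succAbove]

  have VBD : L4 ![0,1,2,4] (e 0 * (e 1 * (e 3 * e 4))) = 0 := by
    rw [L4_ee]
    simp [Matrix.det_succ_row_zero, Fin.sum_univ_succ, sgl, Pi.single_apply, Fin.succAbove]

  have VCA : L4 ![0,1,2,5] (e 0 * (e 1 * (e 2 * e 3))) = 0 := by
    rw [L4_ee]
    simp [Matrix.det_succ_row_zero, Fin.sum_univ_succ, sgl, Pi.single_apply, Fin.succAbove]

  have VCB : L4 ![0,1,2,5] (e 0 * (e 1 * (e 2 * e 4))) = 0 := by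
    rw [L4_ee]
    simp [Matrix.det_succ_row_zero, Fin.sum_univ_succ, sgl, Pi.single_apply, Fin.succAbove]

  have VCC : L4 ![0,1,2,5] (e 0 * (e 1 * (e 2 * e 5))) = 1 := by
    rw [L4_ee]
    simp [Matrix.det_succ_row_zero, Fin.sum_univ_succ, sgl, Pi.single_apply, Fin.succAbove]

  have VCD : L4 ![0,1,2,5] (e 0 * (e 1 * (e 3 * e 4))) = 0 := by
    rw [L4_ee]
    simp [Matrix.det_succ_row_zero, Fin.sum_univ_succ, sgl, Pi.single_apply, Fin.succAbove]

  have VDA : L4 ![0,1,3,4] (e 0 * (e 1 * (e 2 * e 3))) = 0 := by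
    rw [L4_ee]
    simp [Matrix.det_succ_row_zero, Fin.sum_univ_succ, sgl, Pi.single_apply, Fin.succAbove]

  have VDB : L4 ![0,1,3,4] (e 0 * (e 1 * (e 2 * e 4))) = 0 := by
    rw [L4_ee]
    simp [Matrix.det_succ_row_zero, Fin.sum_univ_succ, sgl, Pi.single_apply, Fin.succAbove]

  have VDC : L4 ![0,1,3,4] (e 0 * (e 1 * (e 2 * e 5))) = 0 := by
    rw [L4_ee]
    simp [Matrix.det_succ_row_zero, Fin.sum_univ_succ, sgl, Pi.single_apply, Fin.succAbove]

  have VDD : L4 ![0,1,3,4] (e 0 * (e 1 * (e 3 * e 4))) = 1 := by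
    rw [L4_ee]
    simp [Matrix.det_succ_row_zero, Fin.sum_univ_succ, sgl, Pi.single_apply, Fin.succAbove]

  have E1 : z 0 * (k 3 4 - k 4 3) + z 1 * (k 2 5 - k 5 2) = 0 := by
    have h := congrArg (L4 ![0,1,2,3]) h2
    simp only [map_add, map_smul, map_zero, VAA, VAB, VAC, VAD, smul_eq_mul, mul_one,
      mul_zero, add_zero, zero_add] at h
    linear_combination h
  have E2 : z 1 * (k 3 4 - k 4 3) = 0 := by
    have h := congrArg (L4 ![0,1,2,4]) h2
    simp only [map_add, map_smul, map_zero, VBA, VBB, VBC, VBD, smul_eq_mul, mul_one,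
      mul_zero, add_zero, zero_add] at h
    linear_combination h
  have E3 : z 0 * (k 5 4 - k 4 5) + z 1 * (k 3 5 - k 5 3) = 0 := by
    have h := congrArg (L4 ![0,1,2,5]) h2
    simp only [map_add, map_smul, map_zero, VCA, VCB, VCC, VCD, smul_eq_mul, mul_one,
      mul_zero, add_zero, zero_add] at h
    linear_combination h
  have E4 : z 1 * (k 5 4 - k 4 5) = 0 := by
    have h := congrArg (L4 ![0,1,3,4]) h2
    simp only [map_add, map_smul, map_zero, VDA, VDB, VDC, VDD, smul_eq_mul, mul_one,
      mul_zero, add_zero, zero_add] at h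
    linear_combination h
  have hθθ : oneForm z * (oneForm fun i => starRingEnd ℂ (z i))
      = (z 0 * starRingEnd ℂ (z 1) - z 1 * starRingEnd ℂ (z 0)) • (e 0 * e 1) := by
    rw [hθ, hθb]
    simp only [add_mul, mul_add, smul_mul_assoc, mul_smul_comm, smul_smul, e_sq,
      smul_zero, add_zero, zero_add, sw_1_0, smul_neg]
    module
  apply hne
  rw [mul_assoc, mul_assoc, hθθ]
  by_cases hz1 : z 1 = 0
  · rw [hz1]
    simp
  · have hc34 : k 3 4 - k 4 3 = 0 := by
      rcases mul_eq_zero.mp E2 with h | h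
      · exact absurd h hz1
      · exact h
    have hc45 : k 5 4 - k 4 5 = 0 := by
      rcases mul_eq_zero.mp E4 with h | h
      · exact absurd h hz1
      · exact h
    have hc25 : k 2 5 - k 5 2 = 0 := by
      rw [hc34, mul_zero, zero_add] at E1
      rcases mul_eq_zero.mp E1 with h | h
      · exact absurd h hz1
      · exact h
    have hc35 : k 3 5 - k 5 3 = 0 := by
      rw [hc45, mul_zero, zero_add] at E3
      rcases mul_eq_zero.mp E3 with h | h
      · exact absurd h hz1
      · exact h
    have hwext : ∀ i j : Fin 6, k i j - k j i = 0 → wc i j = wc j i := by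
      intro i j hij
      have him := congrArg Complex.im hij
      simp only [hk, Complex.sub_im, Complex.add_im, Complex.ofReal_im, Complex.mul_im,
        Complex.I_re, Complex.I_im, Complex.ofReal_re, Complex.zero_im, zero_mul, one_mul,
        zero_add, mul_zero] at him
      simp only [hwc]
      norm_cast
      linarith [him]
    have hw34 := hwext 3 4 hc34
    have hw45 := hwext 5 4 hc45
    have hw25 := hwext 2 5 hc25
    have hw35 := hwext 3 5 hc35
    have hu : twoForm wc * (e 0 * e 1)
        = (wc 2 3 - wc 3 2) • (e 0 * (e 1 * (e 2 * e 3)))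
        + (wc 2 4 - wc 4 2) • (e 0 * (e 1 * (e 2 * e 4)))
        + (wc 2 5 - wc 5 2) • (e 0 * (e 1 * (e 2 * e 5)))
        + (wc 3 4 - wc 4 3) • (e 0 * (e 1 * (e 3 * e 4)))
        + (wc 3 5 - wc 5 3) • (e 0 * (e 1 * (e 3 * e 5)))
        + (wc 4 5 - wc 5 4) • (e 0 * (e 1 * (e 4 * e 5))) := by
      rw [twoForm_mul]
      simp only [Fin.sum_univ_six, D_zero, D_one, D_two, D_three, D_four, D_five,
      mul_assoc, zero_mul, mul_zero, zero_sub, sub_zero, smul_neg, smul_zero, neg_zero, mul_neg,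
      add_zero, zero_add, neg_neg, smul_sub, mul_add, mul_smul_comm, smul_smul, smul_add, sub_self,
      sw_1_0, sw'_1_0, sw_2_0, sw'_2_0, sw_2_1, sw'_2_1, sw_3_0, sw'_3_0, sw_3_1, sw'_3_1, sw_3_2, sw'_3_2, sw_4_0, sw'_4_0, sw_4_1, sw'_4_1, sw_4_2, sw'_4_2, sw_4_3, sw'_4_3, sw_5_0, sw'_5_0, sw_5_1, sw'_5_1, sw_5_2, sw'_5_2, sw_5_3, sw'_5_3, sw_5_4, sw'_5_4, e_sq, e_sq']
      module
    have hu' : twoForm wc * (e 0 * e 1)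
        = (wc 2 3 - wc 3 2) • (e 0 * (e 1 * (e 2 * e 3)))
        + (wc 2 4 - wc 4 2) • (e 0 * (e 1 * (e 2 * e 4))) := by
      rw [hu, hw34, hw25, hw35]
      rw [show wc 4 5 = wc 5 4 from hw45.symm ▸ rfl]
      simp [sub_self]
    have hv : twoForm wc * ((wc 2 3 - wc 3 2) • (e 0 * (e 1 * (e 2 * e 3)))
        + (wc 2 4 - wc 4 2) • (e 0 * (e 1 * (e 2 * e 4)))) = 0 := by
      rw [twoForm_mul]
      simp only [Fin.sum_univ_six, D_zero, D_one, D_two, D_three, D_four, D_five,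
      mul_assoc, zero_mul, mul_zero, zero_sub, sub_zero, smul_neg, smul_zero, neg_zero, mul_neg,
      add_zero, zero_add, neg_neg, smul_sub, mul_add, mul_smul_comm, smul_smul, smul_add, sub_self,
      sw_1_0, sw'_1_0, sw_2_0, sw'_2_0, sw_2_1, sw'_2_1, sw_3_0, sw'_3_0, sw_3_1, sw'_3_1, sw_3_2, sw'_3_2, sw_4_0, sw'_4_0, sw_4_1, sw'_4_1, sw_4_2, sw'_4_2, sw_4_3, sw'_4_3, sw_5_0, sw'_5_0, sw_5_1, sw'_5_1, sw_5_2, sw'_5_2, sw_5_3, sw'_5_3, sw_5_4, sw'_5_4, e_sq, e_sq']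
      rw [hw35, hw45]
      module
    rw [mul_smul_comm, mul_smul_comm, hu', hv, smul_zero]

end
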